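/- Let T' be a tree with at least two vertices and let T be the tree obtained from T' by adding a disjoint copy of a subdivided star X having t ≥ 2 leaves and joining the center x of X by an edge to a vertex of T'. Then γ(T) = γ(T') + t and γ_t2(T) ≤ γ_t2(T') + t; in particular, if γ(T') = γ_t2(T'), then γ(T) = γ_t2(T). -/

import Mathlib

open SimpleGraph

/-- A dominating set: every vertex outside `S` has a neighbor in `S`. -/
def IsDominatingSet {V : Type} (G : SimpleGraph V) (S : Set V) : Prop :=
  ∀ v ∉ S, ∃ u ∈ S, G.Adj u v

/-- A total dominating set: every vertex has a neighbor in `S`. -/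
def IsTotalDominatingSet {V : Type} (G : SimpleGraph V) (S : Set V) : Prop :=
  ∀ v : V, ∃ u ∈ S, G.Adj u v

/-- `u` is within distance two of `v`. -/
def WithinTwo {V : Type} (G : SimpleGraph V) (u v : V) : Prop :=
  G.Adj u v ∨ ∃ w, G.Adj u w ∧ G.Adj w v

/-- A semitotal dominating set: a dominating set in which every vertex is within
distance two of another vertex of the set. -/
def IsSemitotalDominatingSet {V : Type} (G : SimpleGraph V) (S : Set V) : Prop :=
  IsDominatingSet G S ∧ ∀ v ∈ S, ∃ u ∈ S, u ≠ v ∧ WithinTwo G u v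

/-- The domination number `γ(G)`. -/
noncomputable def dominationNumber {V : Type} (G : SimpleGraph V) : ℕ :=
  sInf {n | ∃ S : Set V, IsDominatingSet G S ∧ S.ncard = n}

/-- The total domination number `γ_t(G)`. -/
noncomputable def totalDominationNumber {V : Type} (G : SimpleGraph V) : ℕ :=
  sInf {n | ∃ S : Set V, IsTotalDominatingSet G S ∧ S.ncard = n}

/-- The semitotal domination number `γ_t2(G)`. -/
noncomputable def semitotalDominationNumber {V : Type} (G : SimpleGraph V) : ℕ :=
  sInf {n | ∃ S : Set V, IsSemitotalDominatingSet G S ∧ S.ncard = n}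

/-- A leaf: a vertex of degree one. -/
def IsLeaf {V : Type} (G : SimpleGraph V) (v : V) : Prop :=
  (G.neighborSet v).ncard = 1

/-- A support vertex: a vertex adjacent to a leaf. -/
def IsSupport {V : Type} (G : SimpleGraph V) (v : V) : Prop :=
  ∃ u, G.Adj v u ∧ IsLeaf G u

/-- A star: a graph isomorphic to `K_{1,m}` for some `m ≥ 1`. -/
def IsStar {V : Type} (G : SimpleGraph V) : Prop :=
  ∃ m : ℕ, 1 ≤ m ∧ Nonempty (G ≃g completeBipartiteGraph Unit (Fin m))

/-- The graph obtained from the disjoint union of `G` and `H` by adding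
the single edge joining `v : V` to `w : W`. -/
def attach {V W : Type} (G : SimpleGraph V) (H : SimpleGraph W) (v : V) (w : W) :
    SimpleGraph (V ⊕ W) where
  Adj x y :=
    match x, y with
    | Sum.inl a, Sum.inl b => G.Adj a b
    | Sum.inr a, Sum.inr b => H.Adj a b
    | Sum.inl a, Sum.inr b => a = v ∧ b = w
    | Sum.inr a, Sum.inl b => b = v ∧ a = w
  symm := by
    constructor
    rintro (a | a) (b | b) h
    · exact G.adj_symm h
    · exact ⟨h.1, h.2⟩
    · exact ⟨h.1, h.2⟩
    · exact H.adj_symm h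
  loopless := by
    constructor
    rintro (a | a) h
    · exact G.irrefl h
    · exact H.irrefl h

/-- The statuses used to label the vertices of trees in the family `𝒯`. -/
inductive Label : Type
  | A | B | C
deriving DecidableEq

/-- The labeling of the path `P₅` assigning `A` to the two support vertices,
`C` to the two leaves and `B` to the center. -/
def pathLabel : Fin 5 → Label
  | 0 => Label.C
  | 1 => Label.A
  | 2 => Label.B
  | 3 => Label.A
  | 4 => Label.C

/-- The family `𝒯` of labeled trees: it contains the labeled path `P₅`, and is closed
under operation `𝒪₁` (attach a new leaf labeled `C` to a vertex labeled `A`), operation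
`𝒪₂` (attach a labeled path `P₅` to a degree-one vertex labeled `C`), and under
isomorphism of labeled graphs. -/
inductive TFamily : ∀ {V : Type}, SimpleGraph V → (V → Label) → Prop
  | base : TFamily (SimpleGraph.pathGraph 5) pathLabel
  | op1 {V : Type} {G : SimpleGraph V} {f : V → Label} (v : V)
      (hv : f v = Label.A) (h : TFamily G f) :
      TFamily (attach G (⊥ : SimpleGraph (Fin 1)) v 0)
        (Sum.elim f (fun _ => Label.C))
  | op2 {V : Type} {G : SimpleGraph V} {f : V → Label} (v : V)
      (hv : f v = Label.C) (hdeg : (G.neighborSet v).ncard = 1) (h : TFamily G f) :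
      TFamily (attach G (SimpleGraph.pathGraph 5) v 0) (Sum.elim f pathLabel)
  | iso {V W : Type} {G : SimpleGraph V} {H : SimpleGraph W} {f : V → Label}
      (e : G ≃g H) (h : TFamily G f) : TFamily H (fun w => f (e.symm w))

/-- The subdivided star with `t` leaves: center `none`, and for each `i : Fin t`
a path `none — some (i,0) — some (i,1)`. -/
def subdividedStar (t : ℕ) : SimpleGraph (Option (Fin t × Fin 2)) :=
  SimpleGraph.fromRel (fun x y =>
    match x, y with
    | none, some p => p.2 = 0
    | some p, some q => p.1 = q.1 ∧ p.2 = 0 ∧ q.2 = 1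
    | _, _ => False)

/-- The tree `Y` with three leaves, obtained from the star `K_{1,3}` with center `0`
by subdividing exactly one edge: edges `0-1`, `0-2`, `0-3`, `3-4`.  Its leaves are
`1`, `2`, `4`; the leaf-neighbors of the center are `1` and `2`. -/
def Ytree : SimpleGraph (Fin 5) :=
  SimpleGraph.fromRel (fun x y =>
    (x = 0 ∧ y = 1) ∨ (x = 0 ∧ y = 2) ∨ (x = 0 ∧ y = 3) ∨ (x = 3 ∧ y = 4))

/-- An almost dominating set of `G` relative to `v`: dominates every vertex except
possibly `v`. -/
def IsAlmostDominatingSet {V : Type} (G : SimpleGraph V) (v : V) (S : Set V) : Prop :=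
  ∀ w, w ≠ v → w ∉ S → ∃ u ∈ S, G.Adj u w

/-- The almost domination number `γ(G; v)`. -/
noncomputable def almostDominationNumber {V : Type} (G : SimpleGraph V) (v : V) : ℕ :=
  sInf {n | ∃ S : Set V, IsAlmostDominatingSet G v S ∧ S.ncard = n}

/-- The family `𝒪` of trees: all trees obtainable from the path `P₄` by a finite
sequence of the operations `𝒪₁`–`𝒪₄` (and taking isomorphic copies). -/
inductive OFamily : ∀ {V : Type}, SimpleGraph V → Prop
  | base : OFamily (SimpleGraph.pathGraph 4)
  | op1 {V : Type} {G : SimpleGraph V} (v : V)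
      (hv : ∃ S : Set V, IsSemitotalDominatingSet G S ∧
        S.ncard = semitotalDominationNumber G ∧ v ∈ S)
      (h : OFamily G) :
      OFamily (attach G (⊥ : SimpleGraph (Fin 1)) v 0)
  | op2short {V : Type} {G : SimpleGraph V} (v : V)
      (hv : almostDominationNumber G v = dominationNumber G) (h : OFamily G) :
      OFamily (attach G (SimpleGraph.pathGraph 2) v 0)
  | op2long {V : Type} {G : SimpleGraph V} (v : V)
      (hv : almostDominationNumber G v = dominationNumber G) (h : OFamily G) :
      OFamily (attach G (SimpleGraph.pathGraph 5) v 0)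
  | op3 {V : Type} {G : SimpleGraph V} (v : V) (t : ℕ) (ht : 2 ≤ t) (h : OFamily G) :
      OFamily (attach G (subdividedStar t) v none)
  | op4 {V : Type} {G : SimpleGraph V} (v : V) (h : OFamily G) :
      OFamily (attach G Ytree v 1)
  | iso {V W : Type} {G : SimpleGraph V} {H : SimpleGraph W}
      (e : G ≃g H) (h : OFamily G) : OFamily H

section MyAux
set_option linter.unusedSectionVars false

@[simp] lemma attach_adj_inl_inl {V W : Type} (G : SimpleGraph V) (H : SimpleGraph W)
    (v : V) (w : W) (a b : V) :
    (attach G H v w).Adj (Sum.inl a) (Sum.inl b) ↔ G.Adj a b := Iff.rfl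

@[simp] lemma attach_adj_inr_inr {V W : Type} (G : SimpleGraph V) (H : SimpleGraph W)
    (v : V) (w : W) (a b : W) :
    (attach G H v w).Adj (Sum.inr a) (Sum.inr b) ↔ H.Adj a b := Iff.rfl

@[simp] lemma attach_adj_inl_inr {V W : Type} (G : SimpleGraph V) (H : SimpleGraph W)
    (v : V) (w : W) (a : V) (b : W) :
    (attach G H v w).Adj (Sum.inl a) (Sum.inr b) ↔ (a = v ∧ b = w) := Iff.rfl

@[simp] lemma attach_adj_inr_inl {V W : Type} (G : SimpleGraph V) (H : SimpleGraph W)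
    (v : V) (w : W) (a : W) (b : V) :
    (attach G H v w).Adj (Sum.inr a) (Sum.inl b) ↔ (b = v ∧ a = w) := Iff.rfl

variable {α : Type} [Fintype α]

lemma myDomLe {G : SimpleGraph α} {S : Set α} (hS : IsDominatingSet G S) :
    dominationNumber G ≤ S.ncard := Nat.sInf_le ⟨S, hS, rfl⟩

lemma mySemiLe {G : SimpleGraph α} {S : Set α} (hS : IsSemitotalDominatingSet G S) :
    semitotalDominationNumber G ≤ S.ncard := Nat.sInf_le ⟨S, hS, rfl⟩

lemma myExistsMinDom (G : SimpleGraph α) :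
    ∃ S : Set α, IsDominatingSet G S ∧ S.ncard = dominationNumber G := by
  have hne : {n | ∃ S : Set α, IsDominatingSet G S ∧ S.ncard = n}.Nonempty :=
    ⟨Set.univ.ncard, Set.univ, fun w hw => absurd (Set.mem_univ w) hw, rfl⟩
  exact Nat.sInf_mem hne

lemma myExistsMinSemi {G : SimpleGraph α} (hG : ∀ a : α, ∃ b, G.Adj a b) :
    ∃ S : Set α, IsSemitotalDominatingSet G S ∧ S.ncard = semitotalDominationNumber G := by
  have huniv : IsSemitotalDominatingSet G Set.univ := by
    refine ⟨fun w hw => absurd (Set.mem_univ w) hw, fun x _ => ?_⟩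
    obtain ⟨b, hb⟩ := hG x
    exact ⟨b, Set.mem_univ b, hb.symm.ne, Or.inl hb.symm⟩
  have hne : {n | ∃ S : Set α, IsSemitotalDominatingSet G S ∧ S.ncard = n}.Nonempty :=
    ⟨Set.univ.ncard, Set.univ, huniv, rfl⟩
  exact Nat.sInf_mem hne

lemma myDomLeSemi {G : SimpleGraph α} (hG : ∀ a : α, ∃ b, G.Adj a b) :
    dominationNumber G ≤ semitotalDominationNumber G := by
  obtain ⟨S, hS, hcard⟩ := myExistsMinSemi hG
  calc dominationNumber G ≤ S.ncard := myDomLe hS.1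
    _ = _ := hcard

lemma treeNeighbor {T : SimpleGraph α} (hT : T.IsTree) (hn : 2 ≤ Fintype.card α)
    (a : α) : ∃ b, T.Adj a b := by
  obtain ⟨b, hb⟩ := Fintype.exists_ne_of_one_lt_card hn a
  obtain ⟨w⟩ := hT.isConnected.preconnected a b
  cases w with
  | nil => exact absurd rfl hb
  | cons h p => exact ⟨_, h⟩

lemma ncard_range_fin {β : Type} {t : ℕ} {g : Fin t → β} (h : Function.Injective g) :
    (Set.range g).ncard = t := by
  rw [← Set.image_univ, Set.ncard_image_of_injective _ h, Set.ncard_univ,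
    Nat.card_eq_fintype_card, Fintype.card_fin]

lemma starAdjCenter {t : ℕ} (i : Fin t) :
    (subdividedStar t).Adj none (some (i, 0)) := by
  simp [subdividedStar]

lemma starAdjLeaf {t : ℕ} (i : Fin t) :
    (subdividedStar t).Adj (some (i, 0)) (some (i, 1)) := by
  simp [subdividedStar]

lemma starLeafNbr {t : ℕ} {i : Fin t} {x : Option (Fin t × Fin 2)}
    (h : (subdividedStar t).Adj x (some (i, 1))) : x = some (i, 0) := by
  rcases x with _ | ⟨j, k⟩
  · simp [subdividedStar] at h
  · fin_cases k
    · simp only [subdividedStar, SimpleGraph.fromRel_adj] at h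
      rcases h with ⟨hne, h | h⟩
      · exact congrArg some (Prod.ext h.1 rfl)
      · exact absurd h.2.1 (by decide)
    · simp only [subdividedStar, SimpleGraph.fromRel_adj] at h
      rcases h with ⟨hne, h | h⟩
      · exact absurd h.2.1 (by decide)
      · exact absurd h.2.1 (by decide)

end MyAux

/-- Attaching a subdivided star with `t ≥ 2` leaves by its center to a
vertex of a tree `T'` of order at least 2 gives a tree `T` with `γ(T) = γ(T') + t`,
`γ_t2(T) ≤ γ_t2(T') + t`; in particular `γ(T') = γ_t2(T')` implies `γ(T) = γ_t2(T)`. -/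
theorem attach_subdividedStar_domination {V : Type} [Fintype V] (T' : SimpleGraph V)
    (hT' : T'.IsTree) (hn : 2 ≤ Fintype.card V) (t : ℕ) (ht : 2 ≤ t) (v : V) :
    dominationNumber (attach T' (subdividedStar t) v none) = dominationNumber T' + t ∧
      semitotalDominationNumber (attach T' (subdividedStar t) v none) ≤
        semitotalDominationNumber T' + t ∧
      (dominationNumber T' = semitotalDominationNumber T' →
        dominationNumber (attach T' (subdividedStar t) v none) =
          semitotalDominationNumber (attach T' (subdividedStar t) v none)) := by
  classical
  set G := attach T' (subdividedStar t) v none with hGdef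
  have ht0 : 0 < t := by omega
  let i0 : Fin t := ⟨0, ht0⟩
  -- every vertex of G has a neighbor
  have hGnbr : ∀ x : V ⊕ Option (Fin t × Fin 2), ∃ y, G.Adj x y := by
    rintro (a | x)
    · obtain ⟨b, hb⟩ := treeNeighbor hT' hn a
      exact ⟨Sum.inl b, hb⟩
    · rcases x with _ | ⟨i, j⟩
      · exact ⟨Sum.inr (some (i0, 0)), starAdjCenter i0⟩
      · fin_cases j
        · exact ⟨Sum.inr none, (starAdjCenter i).symm⟩
        · exact ⟨Sum.inr (some (i, 0)), (starAdjLeaf i).symm⟩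
  -- the set of support vertices of the star
  let R : Set (V ⊕ Option (Fin t × Fin 2)) :=
    Set.range (fun i : Fin t => Sum.inr (some (i, 0)))
  have hRinj : Function.Injective
      (fun i : Fin t => (Sum.inr (some (i, (0 : Fin 2))) : V ⊕ Option (Fin t × Fin 2))) := by
    intro i j h; simpa using h
  -- generic facts about inl '' D ∪ R
  have hUnionCard : ∀ D : Set V, (Sum.inl '' D ∪ R).ncard = D.ncard + t := by
    intro D
    have hdisj : Disjoint (Sum.inl '' D) R := by
      rw [Set.disjoint_left]
      rintro x ⟨a, _, rfl⟩ ⟨i, hi⟩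
      exact Sum.inr_ne_inl hi
    rw [Set.ncard_union_eq hdisj, Set.ncard_image_of_injective _ Sum.inl_injective,
      ncard_range_fin hRinj]
  have hUnionDom : ∀ D : Set V, IsDominatingSet T' D →
      IsDominatingSet G (Sum.inl '' D ∪ R) := by
    intro D hD
    rintro (a | x) hx
    · have ha : a ∉ D := fun h => hx (Or.inl ⟨a, h, rfl⟩)
      obtain ⟨u, hu, hadj⟩ := hD a ha
      exact ⟨Sum.inl u, Or.inl ⟨u, hu, rfl⟩, hadj⟩
    · rcases x with _ | ⟨i, j⟩
      · exact ⟨Sum.inr (some (i0, 0)), Or.inr ⟨i0, rfl⟩, (starAdjCenter i0).symm⟩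
      · fin_cases j
        · exact absurd (Or.inr ⟨i, rfl⟩) hx
        · exact ⟨Sum.inr (some (i, 0)), Or.inr ⟨i, rfl⟩, starAdjLeaf i⟩
  -- upper bound for γ
  obtain ⟨D, hD, hDcard⟩ := myExistsMinDom T'
  have hup : dominationNumber G ≤ dominationNumber T' + t := by
    have := myDomLe (hUnionDom D hD)
    rwa [hUnionCard D, hDcard] at this
  -- lower bound for γ
  obtain ⟨S, hS, hScard⟩ := myExistsMinDom G
  have hchoose : ∀ i : Fin t, ∃ x ∈ S,
      x = Sum.inr (some (i, 0)) ∨ x = Sum.inr (some (i, 1)) := by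
    intro i
    by_cases hmem : (Sum.inr (some (i, (1 : Fin 2))) : V ⊕ Option (Fin t × Fin 2)) ∈ S
    · exact ⟨_, hmem, Or.inr rfl⟩
    · obtain ⟨u, hu, hadj⟩ := hS _ hmem
      refine ⟨u, hu, Or.inl ?_⟩
      rcases u with a | x
      · exact absurd hadj.2 (by simp)
      · exact congrArg Sum.inr (starLeafNbr hadj)
  choose g hgS hgval using hchoose
  have hginj : Function.Injective g := by
    intro i j h
    rcases hgval i with hi | hi <;> rcases hgval j with hj | hj <;>
      · rw [hi, hj] at h; simp_all
  let SV : Set V := {a | Sum.inl a ∈ S}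
  have hsub : Sum.inl '' SV ∪ Set.range g ⊆ S := by
    rintro x (⟨a, ha, rfl⟩ | ⟨i, rfl⟩)
    · exact ha
    · exact hgS i
  have hdisj2 : Disjoint (Sum.inl '' SV) (Set.range g) := by
    rw [Set.disjoint_left]
    rintro x ⟨a, _, rfl⟩ ⟨i, hi⟩
    rcases hgval i with h | h <;> rw [h] at hi <;> exact Sum.inr_ne_inl hi
  have hcount : SV.ncard + t ≤ S.ncard := by
    have h1 : (Sum.inl '' SV ∪ Set.range g).ncard ≤ S.ncard :=
      Set.ncard_le_ncard hsub (Set.toFinite S)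
    rwa [Set.ncard_union_eq hdisj2, Set.ncard_image_of_injective _ Sum.inl_injective,
      ncard_range_fin hginj] at h1
  have hlow : dominationNumber T' + t ≤ dominationNumber G := by
    rw [← hScard]
    by_cases hnone : (Sum.inr (none : Option (Fin t × Fin 2)) : V ⊕ _) ∈ S
    · have hdom' : IsDominatingSet T' (insert v SV) := by
        intro a ha
        have ha1 : a ≠ v := fun h => ha (h ▸ Set.mem_insert v SV)
        have ha2 : (Sum.inl a : V ⊕ Option (Fin t × Fin 2)) ∉ S :=
          fun h => ha (Set.mem_insert_of_mem _ h)
        obtain ⟨u, hu, hadj⟩ := hS _ ha2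
        rcases u with b | x
        · exact ⟨b, Set.mem_insert_of_mem _ hu, hadj⟩
        · exact absurd hadj.1 ha1
      have hd : dominationNumber T' ≤ SV.ncard + 1 :=
        le_trans (myDomLe hdom') (Set.ncard_insert_le v SV)
      have hnotmem : (Sum.inr none : V ⊕ Option (Fin t × Fin 2)) ∉
          Sum.inl '' SV ∪ Set.range g := by
        rintro (⟨a, _, h⟩ | ⟨i, hi⟩)
        · exact Sum.inl_ne_inr h
        · rcases hgval i with h | h <;> rw [h] at hi <;> simp at hi
      have hsub2 : insert (Sum.inr none) (Sum.inl '' SV ∪ Set.range g) ⊆ S :=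
        Set.insert_subset hnone hsub
      have h2 : (insert (Sum.inr none) (Sum.inl '' SV ∪ Set.range g)).ncard ≤ S.ncard :=
        Set.ncard_le_ncard hsub2 (Set.toFinite S)
      rw [Set.ncard_insert_of_notMem hnotmem, Set.ncard_union_eq hdisj2,
        Set.ncard_image_of_injective _ Sum.inl_injective, ncard_range_fin hginj] at h2
      omega
    · have hdom' : IsDominatingSet T' SV := by
        intro a ha
        obtain ⟨u, hu, hadj⟩ := hS _ ha
        rcases u with b | x
        · exact ⟨b, hu, hadj⟩
        · rw [hadj.2] at hu; exact absurd hu hnone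
      have := myDomLe hdom'
      omega
  have heq : dominationNumber G = dominationNumber T' + t := le_antisymm hup hlow
  -- semitotal upper bound
  obtain ⟨D2, hD2, hD2card⟩ := myExistsMinSemi (fun a => treeNeighbor hT' hn a)
  have hS2semi : IsSemitotalDominatingSet G (Sum.inl '' D2 ∪ R) := by
    refine ⟨hUnionDom D2 hD2.1, ?_⟩
    rintro x (⟨a, ha, rfl⟩ | ⟨i, rfl⟩)
    · obtain ⟨u, hu, hne, hw2⟩ := hD2.2 a ha
      refine ⟨Sum.inl u, Or.inl ⟨u, hu, rfl⟩, by simpa using hne, ?_⟩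
      rcases hw2 with h | ⟨w, h1, h2⟩
      · exact Or.inl h
      · exact Or.inr ⟨Sum.inl w, h1, h2⟩
    · obtain ⟨j, hj⟩ := Fintype.exists_ne_of_one_lt_card
        (by rw [Fintype.card_fin]; omega : 1 < Fintype.card (Fin t)) i
      refine ⟨Sum.inr (some (j, 0)), Or.inr ⟨j, rfl⟩, by simpa using hj, ?_⟩
      exact Or.inr ⟨Sum.inr none, (starAdjCenter j).symm, starAdjCenter i⟩
  have hsemi : semitotalDominationNumber G ≤ semitotalDominationNumber T' + t := by
    have := mySemiLe hS2semi
    rwa [hUnionCard D2, hD2card] at this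
  refine ⟨heq, hsemi, fun hdst => ?_⟩
  have h1 : dominationNumber G ≤ semitotalDominationNumber G := myDomLeSemi hGnbr
  have h2 : semitotalDominationNumber G ≤ dominationNumber G := by
    calc semitotalDominationNumber G ≤ semitotalDominationNumber T' + t := hsemi
      _ = dominationNumber T' + t := by rw [hdst]
      _ = dominationNumber G := heq.symm
  exact le_antisymm h1 h2
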